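/- Let E_2 be the two-dimensional complex evolution algebra with structural matrix ((1,0),(1,0)) (i.e. e₁e₁ = e₁, e₂e₂ = e₁). A linear map P : ℂ² → ℂ² is a Rota–Baxter operator of weight 1 on E_2 if and only if its matrix is one of the following, for some c ∈ ℂ: ((0,0),(c, ic)); ((0,0),(c, −ic)); ((−1/2, i/2),(−i/2, −1/2)); ((−1/2, −i/2),(i/2, −1/2)); ((−1, 0),(c, −1 + ic)); ((−1, 0),(c, −1 − ic)). -/
import Mathlib


/-- The evolution-algebra product on `ℂ²` determined by a structural matrix `A`:
`e_i · e_i = a_{i1} e₁ + a_{i2} e₂` and `e₁ · e₂ = e₂ · e₁ = 0`. -/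
noncomputable def evMulC (A : Matrix (Fin 2) (Fin 2) ℂ) (x y : Fin 2 → ℂ) : Fin 2 → ℂ :=
  fun k => x 0 * y 0 * A 0 k + x 1 * y 1 * A 1 k

/-- `P` is a Rota–Baxter operator of weight `lam` on the evolution algebra with structural
matrix `A`: `P(x)·P(y) = P(x·P(y) + P(x)·y + lam x·y)` for all `x, y`. -/
def IsRotaBaxter (A : Matrix (Fin 2) (Fin 2) ℂ) (lam : ℂ)
    (P : (Fin 2 → ℂ) →ₗ[ℂ] (Fin 2 → ℂ)) : Prop :=
  ∀ x y : Fin 2 → ℂ,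
    evMulC A (P x) (P y) = P (evMulC A x (P y) + evMulC A (P x) y + lam • evMulC A x y)

lemma Papp (P : (Fin 2 → ℂ) →ₗ[ℂ] (Fin 2 → ℂ)) (x : Fin 2 → ℂ) (k : Fin 2) :
    P x k = x 0 * P ![1, 0] k + x 1 * P ![0, 1] k := by
  have hx : x = x 0 • ![(1:ℂ), 0] + x 1 • ![(0:ℂ), 1] := by
    funext j; fin_cases j <;> simp
  conv_lhs => rw [hx, map_add, map_smul, map_smul]
  simp [mul_comm]

lemma rb_iff (P : (Fin 2 → ℂ) →ₗ[ℂ] (Fin 2 → ℂ)) :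
    IsRotaBaxter !![1, 0; 1, 0] 1 P ↔
      (P ![1,0] 0)^2 + (P ![1,0] 1)^2 = P ![1,0] 0 * (2 * P ![1,0] 0 + 1) ∧
      P ![1,0] 0 * P ![0,1] 0 + P ![1,0] 1 * P ![0,1] 1
        = P ![1,0] 0 * (P ![1,0] 1 + P ![0,1] 0) ∧
      (P ![0,1] 0)^2 + (P ![0,1] 1)^2 = P ![1,0] 0 * (2 * P ![0,1] 1 + 1) ∧
      P ![1,0] 1 * (2 * P ![1,0] 0 + 1) = 0 ∧
      P ![1,0] 1 * (P ![1,0] 1 + P ![0,1] 0) = 0 ∧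
      P ![1,0] 1 * (2 * P ![0,1] 1 + 1) = 0 := by
  set a := P ![1,0] 0 with ha
  set b := P ![1,0] 1 with hb
  set c := P ![0,1] 0 with hc
  set d := P ![0,1] 1 with hd
  constructor
  · intro h
    have H : ∀ x y : Fin 2 → ℂ, ∀ k, evMulC !![1, 0; 1, 0] (P x) (P y) k =
        P (evMulC !![1, 0; 1, 0] x (P y) + evMulC !![1, 0; 1, 0] (P x) y
          + (1:ℂ) • evMulC !![1, 0; 1, 0] x y) k := fun x y k => congrFun (h x y) k
    have h110 := H ![1,0] ![1,0] 0
    have h111 := H ![1,0] ![1,0] 1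
    have h120 := H ![1,0] ![0,1] 0
    have h121 := H ![1,0] ![0,1] 1
    have h220 := H ![0,1] ![0,1] 0
    have h221 := H ![0,1] ![0,1] 1
    rw [Papp] at h110 h111 h120 h121 h220 h221
    simp only [evMulC, Pi.add_apply, Pi.smul_apply, smul_eq_mul, Matrix.cons_val_zero,
      Matrix.cons_val_one, Matrix.head_cons, Matrix.cons_val', Matrix.empty_val',
      Matrix.cons_val_fin_one, Matrix.of_apply, Matrix.vecHead, ← ha, ← hb, ← hc, ← hd]
      at h110 h111 h120 h121 h220 h221
    refine ⟨by linear_combination h110, by linear_combination h120,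
      by linear_combination h220, by linear_combination -h111,
      by linear_combination -h121, by linear_combination -h221⟩
  · rintro ⟨h1, h2, h3, h4, h5, h6⟩ x y
    have key : ∀ k : Fin 2, evMulC !![1, 0; 1, 0] (P x) (P y) k
        = P (evMulC !![1, 0; 1, 0] x (P y) + evMulC !![1, 0; 1, 0] (P x) y
          + (1:ℂ) • evMulC !![1, 0; 1, 0] x y) k := by
      intro k
      rw [show evMulC !![1, 0; 1, 0] (P x) (P y) k
          = (P x 0) * (P y 0) * (!![(1:ℂ), 0; 1, 0] 0 k)
            + (P x 1) * (P y 1) * (!![(1:ℂ), 0; 1, 0] 1 k) from rfl,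
        Papp P (evMulC !![1, 0; 1, 0] x (P y) + evMulC !![1, 0; 1, 0] (P x) y
          + (1:ℂ) • evMulC !![1, 0; 1, 0] x y) k]
      simp only [evMulC, Pi.add_apply, Pi.smul_apply, smul_eq_mul, Matrix.cons_val_zero,
        Matrix.cons_val_one, Matrix.head_cons, Matrix.cons_val', Matrix.empty_val',
        Matrix.cons_val_fin_one, Matrix.of_apply, Matrix.vecHead, ← ha, ← hb, ← hc, ← hd]
      rw [Papp P x 0, Papp P x 1, Papp P y 0, Papp P y 1, ← ha, ← hb, ← hc, ← hd]
      fin_cases k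
      · simp only [Fin.zero_eta, Fin.mk_one, Matrix.cons_val_zero, Matrix.cons_val_one, Matrix.head_cons,
          Matrix.cons_val', Matrix.empty_val', Matrix.cons_val_fin_one, Matrix.of_apply,
          Matrix.vecHead]
        linear_combination (x 0 * y 0) * h1 + (x 0 * y 1 + x 1 * y 0) * h2 + (x 1 * y 1) * h3
      · simp only [Fin.zero_eta, Fin.mk_one, Matrix.cons_val_zero, Matrix.cons_val_one, Matrix.head_cons,
          Matrix.cons_val', Matrix.empty_val', Matrix.cons_val_fin_one, Matrix.of_apply,
          Matrix.vecHead]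
        linear_combination (-(x 0 * y 0)) * h4 + (-(x 0 * y 1 + x 1 * y 0)) * h5
          + (-(x 1 * y 1)) * h6
    funext k
    exact key k

/-- Rota–Baxter operators of weight 1 on `E₂` (`e₁e₁ = e₁, e₂e₂ = e₁`). -/
theorem rb_weight1_E2 (P : (Fin 2 → ℂ) →ₗ[ℂ] (Fin 2 → ℂ)) :
    IsRotaBaxter !![1, 0; 1, 0] 1 P ↔
      ∃ c : ℂ,
        (P ![1, 0] = ![0, 0] ∧ P ![0, 1] = ![c, Complex.I * c]) ∨
        (P ![1, 0] = ![0, 0] ∧ P ![0, 1] = ![c, -Complex.I * c]) ∨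
        (P ![1, 0] = ![-(1/2), Complex.I/2] ∧ P ![0, 1] = ![-Complex.I/2, -(1/2)]) ∨
        (P ![1, 0] = ![-(1/2), -Complex.I/2] ∧ P ![0, 1] = ![Complex.I/2, -(1/2)]) ∨
        (P ![1, 0] = ![-1, 0] ∧ P ![0, 1] = ![c, -1 + Complex.I * c]) ∨
        (P ![1, 0] = ![-1, 0] ∧ P ![0, 1] = ![c, -1 - Complex.I * c]) := by
  rw [rb_iff]
  set a := P ![1,0] 0 with ha
  set b := P ![1,0] 1 with hb
  set c := P ![0,1] 0 with hc
  set d := P ![0,1] 1 with hd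
  have hvec1 : ∀ u v : ℂ, P ![1,0] = ![u, v] ↔ (a = u ∧ b = v) := by
    intro u v
    constructor
    · intro h; exact ⟨by rw [ha, h]; simp, by rw [hb, h]; simp⟩
    · rintro ⟨h1, h2⟩; funext j; fin_cases j
      · simpa using h1
      · simpa using h2
  have hvec2 : ∀ u v : ℂ, P ![0,1] = ![u, v] ↔ (c = u ∧ d = v) := by
    intro u v
    constructor
    · intro h; exact ⟨by rw [hc, h]; simp, by rw [hd, h]; simp⟩
    · rintro ⟨h1, h2⟩; funext j; fin_cases j
      · simpa using h1
      · simpa using h2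
  simp only [hvec1, hvec2]
  have hI := Complex.I_sq
  constructor
  · rintro ⟨h1, h2, h3, h4, h5, h6⟩
    by_cases hb0 : b = 0
    · have haa : a * (a + 1) = 0 := by linear_combination -h1 + b * hb0
      rcases mul_eq_zero.mp haa with ha0 | ha1
      · have hdd : (d - Complex.I * c) * (d + Complex.I * c) = 0 := by
          linear_combination h3 + (2*d+1) * ha0 - c^2 * hI
        rcases mul_eq_zero.mp hdd with h | h
        · exact ⟨c, Or.inl ⟨⟨ha0, hb0⟩, rfl, by linear_combination h⟩⟩
        · exact ⟨c, Or.inr (Or.inl ⟨⟨ha0, hb0⟩, rfl, by linear_combination h⟩)⟩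
      · have hdd : (d + 1 - Complex.I * c) * (d + 1 + Complex.I * c) = 0 := by
          linear_combination h3 + (2*d+1) * ha1 - c^2 * hI
        rcases mul_eq_zero.mp hdd with h | h
        · exact ⟨c, Or.inr (Or.inr (Or.inr (Or.inr (Or.inl
            ⟨⟨by linear_combination ha1, hb0⟩, rfl, by linear_combination h⟩))))⟩
        · exact ⟨c, Or.inr (Or.inr (Or.inr (Or.inr (Or.inr
            ⟨⟨by linear_combination ha1, hb0⟩, rfl, by linear_combination h⟩))))⟩
    · have ha2 : 2 * a + 1 = 0 := (mul_eq_zero.mp h4).resolve_left hb0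
      have hd2 : 2 * d + 1 = 0 := (mul_eq_zero.mp h6).resolve_left hb0
      have hc2 : b + c = 0 := (mul_eq_zero.mp h5).resolve_left hb0
      have hbb : (b - Complex.I/2) * (b + Complex.I/2) = 0 := by
        linear_combination h1 + ((2*a+1)/4) * ha2 - (1/4) * hI
      rcases mul_eq_zero.mp hbb with h | h
      · exact ⟨0, Or.inr (Or.inr (Or.inl ⟨⟨by linear_combination ha2/2,
          by linear_combination h⟩, by linear_combination hc2 - h,
          by linear_combination hd2/2⟩))⟩
      · exact ⟨0, Or.inr (Or.inr (Or.inr (Or.inl ⟨⟨by linear_combination ha2/2,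
          by linear_combination h⟩, by linear_combination hc2 - h,
          by linear_combination hd2/2⟩)))⟩
  · rintro ⟨c0, (⟨⟨h1, h2⟩, h3, h4⟩ | ⟨⟨h1, h2⟩, h3, h4⟩ | ⟨⟨h1, h2⟩, h3, h4⟩ |
      ⟨⟨h1, h2⟩, h3, h4⟩ | ⟨⟨h1, h2⟩, h3, h4⟩ | ⟨⟨h1, h2⟩, h3, h4⟩)⟩ <;>
    refine ⟨?_, ?_, ?_, ?_, ?_, ?_⟩ <;> simp only [h1, h2, h3, h4] <;>
      first
        | ring1
        | linear_combination c0 ^ 2 * hI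
        | linear_combination (1/4) * hI
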